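/- Let (X|Y) be an n×2n matrix of rank n over a field of characteristic 0 with X Yᵗ symmetric, and let 𝓑 be the collection of admissible n-subsets B of [n]∪[n]* such that the n columns indexed by B are linearly independent. Then 𝓑 satisfies the symmetric exchange axiom, i.e. 𝓑 is a Lagrangian matroid. -/

import Mathlib

/-- The involution `*` on `[n] ∪ [n]*`, encoded as `Fin n × Bool`:
`(j, true)` is the column `j` of `X`, `(j, false)` is the column `j*` of `Y`. -/
def dstar {n : ℕ} (x : Fin n × Bool) : Fin n × Bool := (x.1, !x.2)

/-- An admissible `n`-subset of `[n] ∪ [n]*`. -/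
def Admissible {n : ℕ} (A : Finset (Fin n × Bool)) : Prop :=
  A.card = n ∧ ∀ x ∈ A, dstar x ∉ A

/-- The column of `(X|Y)` indexed by an element of `[n] ∪ [n]*`. -/
def col {F : Type*} [Field F] {n : ℕ} (X Y : Matrix (Fin n) (Fin n) F)
    (x : Fin n × Bool) : Fin n → F :=
  fun i => if x.2 then X i x.1 else Y i x.1

namespace LagAux

variable {F : Type*} [Field F] {n : ℕ}

/-- The `n × n` matrix whose `k`-th column is the column of `(X|Y)` selected by `ε`. -/
def Ncols (X Y : Matrix (Fin n) (Fin n) F) (ε : Fin n → Bool) :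
    Matrix (Fin n) (Fin n) F :=
  Matrix.of fun i k => col X Y (k, ε k) i

/-- The admissible set determined by `ε`. -/
def graphB {n : ℕ} (ε : Fin n → Bool) : Finset (Fin n × Bool) :=
  Finset.univ.image fun i => (i, ε i)

lemma mem_graphB {ε : Fin n → Bool} {x : Fin n × Bool} :
    x ∈ graphB ε ↔ x.2 = ε x.1 := by
  constructor
  · intro h
    simp only [graphB, Finset.mem_image, Finset.mem_univ, true_and] at h
    obtain ⟨i, hi⟩ := h
    cases hi; rfl
  · intro h
    simp only [graphB, Finset.mem_image, Finset.mem_univ, true_and]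
    exact ⟨x.1, by rw [← h]⟩

lemma bool_ne_iff (b c : Bool) : ¬ b = c ↔ b = !c := by
  cases b <;> cases c <;> simp

lemma card_graphB (ε : Fin n → Bool) : (graphB ε).card = n := by
  rw [graphB, Finset.card_image_of_injective]
  · simp
  · intro a b hab; exact (Prod.ext_iff.1 hab).1

lemma admissible_graphB (ε : Fin n → Bool) : Admissible (graphB ε) := by
  refine ⟨card_graphB ε, fun x hx hx' => ?_⟩
  rw [mem_graphB] at hx hx'
  simp only [dstar] at hx'
  rw [hx] at hx'
  cases ε x.1 <;> simp_all

lemma exists_graph {A : Finset (Fin n × Bool)} (hA : Admissible A) :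
    ∃ ε : Fin n → Bool, A = graphB ε := by
  classical
  obtain ⟨hcard, hd⟩ := hA
  set ε : Fin n → Bool := fun i => decide ((i, true) ∈ A) with hε
  have hinj : Set.InjOn Prod.fst (A : Set (Fin n × Bool)) := by
    rintro ⟨a, b⟩ ha ⟨c, d⟩ hc h
    simp only at h
    subst h
    by_contra hne
    have hbd : d = !b := by
      cases b <;> cases d <;> simp_all [Prod.ext_iff]
    exact hd (a, b) ha (by rwa [hbd] at hc)
  have himg : A.image Prod.fst = Finset.univ := by
    apply Finset.eq_univ_of_card
    rw [Finset.card_image_of_injOn hinj, hcard, Fintype.card_fin]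
  have hmem : ∀ i : Fin n, (i, ε i) ∈ A := by
    intro i
    have hi : i ∈ A.image Prod.fst := by rw [himg]; exact Finset.mem_univ i
    obtain ⟨y, hy, h⟩ := Finset.mem_image.1 hi
    by_cases hb : y.2 = true
    · have hy' : (i, true) ∈ A := by
        have : y = (i, true) := Prod.ext h hb
        rwa [this] at hy
      have : ε i = true := by simp [hε, hy']
      rwa [this]
    · have hb' : y.2 = false := by cases hy2 : y.2 <;> simp_all
      have hy' : (i, false) ∈ A := by
        have : y = (i, false) := Prod.ext h hb'
        rwa [this] at hy
      have : ε i = false := by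
        simp only [hε, decide_eq_false_iff_not]
        intro hc
        exact hd (i, true) hc (by simpa [dstar] using hy')
      rwa [this]
  refine ⟨ε, ?_⟩
  have hsub : graphB ε ⊆ A := by
    intro x hx
    rw [mem_graphB] at hx
    have : x = (x.1, ε x.1) := Prod.ext rfl hx
    rw [this]; exact hmem x.1
  exact (Finset.eq_of_subset_of_card_le hsub (by rw [hcard, card_graphB])).symm

/-- Linear independence of the columns selected by `ε` is equivalent to the
nonvanishing of the corresponding determinant. -/
lemma li_iff_det (X Y : Matrix (Fin n) (Fin n) F) (ε : Fin n → Bool) :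
    LinearIndependent F (fun b : {x // x ∈ graphB ε} => col X Y b.1)
      ↔ (Ncols X Y ε).det ≠ 0 := by
  classical
  let e : Fin n ≃ {x // x ∈ graphB ε} :=
    { toFun := fun i => ⟨(i, ε i), mem_graphB.2 rfl⟩
      invFun := fun x => x.1.1
      left_inv := fun i => rfl
      right_inv := by
        rintro ⟨⟨a, b⟩, hx⟩
        have : b = ε a := mem_graphB.1 hx
        subst this; rfl }
  rw [← linearIndependent_equiv e (f := fun b : {x // x ∈ graphB ε} => col X Y b.1)]
  have : (fun b : {x // x ∈ graphB ε} => col X Y b.1) ∘ e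
      = fun i => (Ncols X Y ε).transpose i := by
    funext i; ext k
    simp [e, Ncols, Matrix.transpose_apply]
  rw [this, show (fun i => (Ncols X Y ε).transpose i) = (Ncols X Y ε).col from rfl,
    Matrix.linearIndependent_cols_iff_isUnit,
    Matrix.isUnit_iff_isUnit_det, isUnit_iff_ne_zero]

lemma det_ite (M : Matrix (Fin n) (Fin n) F) (p : Fin n → Prop) [DecidablePred p] :
    (Matrix.of fun i k => if p k then M i k else (1 : Matrix (Fin n) (Fin n) F) i k).det
      = (M.submatrix (Subtype.val : {x // p x} → Fin n) Subtype.val).det := by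
  classical
  set Q : Matrix (Fin n) (Fin n) F :=
    Matrix.of fun i k => if p k then M i k else (1 : Matrix (Fin n) (Fin n) F) i k with hQ
  let e : {x // p x} ⊕ {x // ¬ p x} ≃ Fin n := Equiv.sumCompl p
  rw [← Matrix.det_submatrix_equiv_self e Q]
  have hblocks : Q.submatrix e e =
      Matrix.fromBlocks
        (M.submatrix (Subtype.val : {x // p x} → Fin n) Subtype.val)
        0
        (M.submatrix (Subtype.val : {x // ¬ p x} → Fin n) Subtype.val)
        (1 : Matrix {x // ¬ p x} {x // ¬ p x} F) := by
    ext i j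
    rcases i with i | i <;> rcases j with j | j <;>
      simp only [Matrix.submatrix_apply, Matrix.fromBlocks_apply₁₁,
        Matrix.fromBlocks_apply₁₂, Matrix.fromBlocks_apply₂₁, Matrix.fromBlocks_apply₂₂,
        Equiv.sumCompl_apply_inl, Equiv.sumCompl_apply_inr, hQ, Matrix.of_apply, e]
    · rw [if_pos j.2]
    · rw [if_neg j.2]
      simp only [Matrix.zero_apply]
      apply Matrix.one_apply_ne
      intro h
      exact j.2 (h ▸ i.2)
    · rw [if_pos j.2]
    · rw [if_neg j.2]
      by_cases h : i = j
      · subst h; simp [Matrix.one_apply_eq]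
      · rw [Matrix.one_apply_ne (fun hc => h (Subtype.ext hc)),
          Matrix.one_apply_ne h]
  rw [hblocks, Matrix.det_fromBlocks_zero₁₂, Matrix.det_one, mul_one]

lemma det_single (M : Matrix (Fin n) (Fin n) F) (j : Fin n)
    [Fintype {x : Fin n // x = j}] [DecidableEq {x : Fin n // x = j}] :
    (M.submatrix (Subtype.val : {x // x = j} → Fin n) Subtype.val).det = M j j := by
  letI : Unique {x : Fin n // x = j} :=
    ⟨⟨⟨j, rfl⟩⟩, fun x => Subtype.ext x.2⟩
  rw [Matrix.det_unique]
  rfl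

lemma det_pair (M : Matrix (Fin n) (Fin n) F) {j k : Fin n} (hjk : j ≠ k)
    [Fintype {x : Fin n // x = j ∨ x = k}] [DecidableEq {x : Fin n // x = j ∨ x = k}] :
    (M.submatrix (Subtype.val : {x // x = j ∨ x = k} → Fin n) Subtype.val).det
      = M j j * M k k - M j k * M k j := by
  let e : Fin 2 ≃ {x : Fin n // x = j ∨ x = k} :=
    { toFun := ![⟨j, Or.inl rfl⟩, ⟨k, Or.inr rfl⟩]
      invFun := fun x => if x.val = j then 0 else 1
      left_inv := by
        intro a
        fin_cases a
        · simp
        · simp [hjk.symm]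
      right_inv := by
        rintro ⟨x, hx⟩
        apply Subtype.ext
        simp only
        by_cases h : x = j
        · subst h; simp
        · rw [if_neg h]
          rcases hx with h' | h'
          · exact absurd h' h
          · subst h'; simp }
  rw [← Matrix.det_submatrix_equiv_self e, Matrix.det_fin_two]
  simp [e, Matrix.submatrix_apply]

/-- After pivoting by `(Ncols εA)⁻¹`, the matrix of "complementary" columns. -/
noncomputable def Mmat (X Y : Matrix (Fin n) (Fin n) F) (εA : Fin n → Bool) :
    Matrix (Fin n) (Fin n) F :=
  (Ncols X Y εA)⁻¹ * Ncols X Y (fun i => !(εA i))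

lemma mul_Ncols_congr (X Y : Matrix (Fin n) (Fin n) F) (P : Matrix (Fin n) (Fin n) F)
    (ε ε' : Fin n → Bool) (k : Fin n) (h : ε k = ε' k) (i : Fin n) :
    (P * Ncols X Y ε) i k = (P * Ncols X Y ε') i k := by
  simp only [Matrix.mul_apply, Ncols, Matrix.of_apply, h]

lemma pivot_entry (X Y : Matrix (Fin n) (Fin n) F) (εA : Fin n → Bool)
    (hu : IsUnit (Ncols X Y εA).det) (ε' : Fin n → Bool) (i k : Fin n) :
    ((Ncols X Y εA)⁻¹ * Ncols X Y ε') i k =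
      if ε' k = εA k then (1 : Matrix (Fin n) (Fin n) F) i k
      else Mmat X Y εA i k := by
  by_cases h : ε' k = εA k
  · rw [if_pos h]
    exact (mul_Ncols_congr X Y _ ε' εA k h i).trans
      (by rw [Matrix.nonsing_inv_mul _ hu])
  · rw [if_neg h]
    have h' : ε' k = !(εA k) := by
      cases h1 : ε' k <;> cases h2 : εA k <;> simp_all
    exact mul_Ncols_congr X Y _ ε' (fun i => !(εA i)) k h' i

/-- The key symmetry: derived from `X * Yᵀ` being symmetric, the pivoted matrix
`Mmat` is symmetric up to the signs `±1` recorded by `εA`. -/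
lemma Mmat_symm (X Y : Matrix (Fin n) (Fin n) F) (εA : Fin n → Bool)
    (hsymm : (X * Y.transpose).IsSymm) (hu : IsUnit (Ncols X Y εA).det) (i k : Fin n) :
    (if εA i then (1:F) else -1) * Mmat X Y εA k i
      = (if εA k then (1:F) else -1) * Mmat X Y εA i k := by
  set P := (Ncols X Y εA)⁻¹ with hP
  set M := Mmat X Y εA with hM
  have hXN : X = Ncols X Y (fun _ => true) := by
    ext a b; simp [Ncols, col]
  have hYN : Y = Ncols X Y (fun _ => false) := by
    ext a b; simp [Ncols, col]
  have hX : P * X = P * Ncols X Y (fun _ => true) := by rw [← hXN]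
  have hY : P * Y = P * Ncols X Y (fun _ => false) := by rw [← hYN]
  set G : Matrix (Fin n) (Fin n) F := (P * X) * (P * Y).transpose with hG
  have key : G = P * (X * Y.transpose) * P.transpose := by
    rw [hG, Matrix.transpose_mul]
    simp only [Matrix.mul_assoc]
  have hGsymm : G.transpose = G := by
    rw [key, Matrix.transpose_mul, Matrix.transpose_mul, Matrix.transpose_transpose,
      hsymm.eq]
    simp only [Matrix.mul_assoc]
  have hX' : ∀ a l, (P * X) a l =
      if εA l then (1 : Matrix (Fin n) (Fin n) F) a l else M a l := by
    intro a l
    rw [hX, pivot_entry X Y εA hu]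
    by_cases he : εA l <;> simp [he, hM]
  have hY' : ∀ a l, (P * Y) a l =
      if εA l then M a l else (1 : Matrix (Fin n) (Fin n) F) a l := by
    intro a l
    rw [hY, pivot_entry X Y εA hu]
    by_cases he : εA l <;> simp [he, hM]
  have hGentry : ∀ a b, G a b =
      (if εA a then M b a else 0) + (if εA b then 0 else M a b) := by
    intro a b
    rw [hG, Matrix.mul_apply]
    have : ∀ l, (P * X) a l * (P * Y).transpose l b =
        (if l = a then (if εA l then M b l else 0) else 0)
          + (if l = b then (if εA l then 0 else M a l) else 0) := by
      intro l
      rw [Matrix.transpose_apply, hX', hY']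
      by_cases h1 : εA l
      · simp only [if_pos h1, ite_self, add_zero]
        by_cases h2 : l = a
        · subst h2; rw [if_pos rfl, Matrix.one_apply_eq, one_mul]
        · rw [if_neg h2, Matrix.one_apply_ne (fun h => h2 h.symm), zero_mul]
      · simp only [if_neg h1, ite_self, zero_add]
        by_cases h2 : l = b
        · subst h2; rw [if_pos rfl, Matrix.one_apply_eq, mul_one]
        · rw [if_neg h2, Matrix.one_apply_ne (fun h => h2 h.symm), mul_zero]
    rw [Finset.sum_congr rfl fun l _ => this l, Finset.sum_add_distrib,
      Finset.sum_ite_eq', Finset.sum_ite_eq']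
    simp
  have h1 : G k i = G i k := by
    have := congrFun (congrFun hGsymm i) k
    rwa [Matrix.transpose_apply] at this
  rw [hGentry, hGentry] at h1
  cases hi : εA i <;> cases hk : εA k <;>
    simp only [hi, hk, if_true, if_false, Bool.false_eq_true, add_zero, zero_add,
      one_mul, neg_mul, neg_neg] at h1 ⊢ <;>
    first
      | linear_combination h1
      | linear_combination -h1

/-- The determinant of the matrix obtained by flipping the choices at the places
where `ε'` differs from `εA` is (up to a unit) the corresponding principal minor
of the pivoted matrix `Mmat`. -/
lemma det_flip_ne (X Y : Matrix (Fin n) (Fin n) F) (εA : Fin n → Bool)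
    (hu : (Ncols X Y εA).det ≠ 0) (ε' : Fin n → Bool)
    (p : Fin n → Prop) [DecidablePred p]
    (hp : ∀ k, ¬ (ε' k = εA k) ↔ p k) :
    (Ncols X Y ε').det ≠ 0 ↔
      ((Mmat X Y εA).submatrix (Subtype.val : {x // p x} → Fin n) Subtype.val).det ≠ 0 := by
  have hu' : IsUnit (Ncols X Y εA).det := isUnit_iff_ne_zero.2 hu
  have key : (Ncols X Y εA)⁻¹ * Ncols X Y ε' =
      Matrix.of (fun i k => if p k then Mmat X Y εA i k
        else (1 : Matrix (Fin n) (Fin n) F) i k) := by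
    ext i k
    rw [pivot_entry X Y εA hu' ε', Matrix.of_apply]
    by_cases h : p k
    · rw [if_pos h, if_neg ((hp k).2 h)]
    · have hek : ε' k = εA k := not_not.1 (fun hn => h ((hp k).1 hn))
      rw [if_neg h, if_pos hek]
  have hdet : ((Ncols X Y εA)⁻¹).det * (Ncols X Y ε').det
      = ((Mmat X Y εA).submatrix (Subtype.val : {x // p x} → Fin n) Subtype.val).det := by
    rw [← Matrix.det_mul, key, det_ite]
  have hPdet : ((Ncols X Y εA)⁻¹).det ≠ 0 :=
    (Matrix.isUnit_nonsing_inv_det _ hu').ne_zero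
  constructor
  · intro h hc
    rw [← hdet] at hc
    rcases mul_eq_zero.1 hc with h' | h'
    · exact hPdet h'
    · exact h h'
  · intro h hc
    rw [← hdet, hc, mul_zero] at h
    exact h rfl

lemma eq_or_eq_dstar {x y : Fin n × Bool} (h : x.1 = y.1) : x = y ∨ x = dstar y := by
  rcases x with ⟨a, b⟩; rcases y with ⟨c, d⟩
  simp only at h; subst h
  cases b <;> cases d <;> simp [dstar]

lemma mem_quad {j k x : Fin n × Bool} :
    x ∈ ({j, dstar j, k, dstar k} : Finset (Fin n × Bool)) ↔ x.1 = j.1 ∨ x.1 = k.1 := by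
  simp only [Finset.mem_insert, Finset.mem_singleton]
  constructor
  · rintro (rfl | rfl | rfl | rfl) <;> simp [dstar]
  · rintro (h | h)
    · rcases eq_or_eq_dstar h with rfl | rfl <;> tauto
    · rcases eq_or_eq_dstar h with rfl | rfl <;> tauto

lemma symmDiff_graph (εA ε' : Fin n → Bool) (j k : Fin n × Bool)
    (h : ∀ i, ε' i = if i = j.1 ∨ i = k.1 then !(εA i) else εA i) :
    symmDiff (graphB εA) {j, dstar j, k, dstar k} = graphB ε' := by
  ext x
  rw [Finset.mem_symmDiff]
  conv_rhs => rw [mem_graphB]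
  by_cases hx : x.1 = j.1 ∨ x.1 = k.1
  · have hq : x ∈ ({j, dstar j, k, dstar k} : Finset (Fin n × Bool)) := mem_quad.2 hx
    have hε : ε' x.1 = !(εA x.1) := by rw [h x.1, if_pos hx]
    rw [hε]
    constructor
    · rintro (⟨hA, hnq⟩ | ⟨hq', hnA⟩)
      · exact absurd hq hnq
      · rw [mem_graphB] at hnA
        exact (bool_ne_iff _ _).1 hnA
    · intro hx2
      refine Or.inr ⟨hq, fun hA => ?_⟩
      rw [mem_graphB] at hA
      rw [hA] at hx2
      cases h' : εA x.1 <;> rw [h'] at hx2 <;> simp at hx2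
  · have hq : x ∉ ({j, dstar j, k, dstar k} : Finset (Fin n × Bool)) :=
      fun hq => hx (mem_quad.1 hq)
    have hε : ε' x.1 = εA x.1 := by rw [h x.1, if_neg hx]
    rw [hε]
    constructor
    · rintro (⟨hA, _⟩ | ⟨hq', _⟩)
      · exact mem_graphB.1 hA
      · exact absurd hq' hq
    · intro hx2
      exact Or.inl ⟨mem_graphB.2 hx2, hq⟩

/-- The heart of the symmetric exchange: for a (sign-twisted) symmetric matrix,
if a principal minor on `p` is nonzero and `p j`, then either the diagonal entry
at `j` is nonzero or some `2×2` principal minor through `j` is nonzero. -/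
lemma exchange_core (M : Matrix (Fin n) (Fin n) F) (σ : Fin n → F)
    (hσ : ∀ i, σ i ≠ 0)
    (hsym : ∀ i k, σ i * M k i = σ k * M i k)
    (p : Fin n → Prop) [DecidablePred p]
    (hdet : (M.submatrix (Subtype.val : {x // p x} → Fin n) Subtype.val).det ≠ 0)
    (j : Fin n) (hj : p j) :
    M j j ≠ 0 ∨ ∃ k, p k ∧ k ≠ j ∧ M j j * M k k - M j k * M k j ≠ 0 := by
  by_contra hc
  push_neg at hc
  obtain ⟨h0, h2⟩ := hc
  apply hdet
  apply Matrix.det_eq_zero_of_row_eq_zero ⟨j, hj⟩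
  rintro ⟨b, hb⟩
  simp only [Matrix.submatrix_apply]
  by_cases hbj : b = j
  · subst hbj; exact h0
  · have h2' := h2 b hb hbj
    rw [h0, zero_mul, zero_sub, neg_eq_zero] at h2'
    have hs := hsym j b
    have hz : σ j * (M b j * M j b) = 0 := by
      rw [mul_comm (M b j), h2', mul_zero]
    rw [← mul_assoc, hs, mul_assoc] at hz
    rcases mul_eq_zero.1 hz with h | h
    · exact absurd h (hσ b)
    · exact (mul_self_eq_zero).1 h

end LagAux

/-- For an `n × 2n` matrix `(X|Y)` of rank `n` with `X Yᵗ` symmetric, the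
collection of admissible `n`-subsets whose columns are linearly independent
satisfies the symmetric exchange axiom (it is a Lagrangian matroid). -/
theorem representable_is_lagrangian {F : Type*} [Field F] [CharZero F] {n : ℕ}
    (X Y : Matrix (Fin n) (Fin n) F)
    (hrank : (Matrix.fromCols X Y).rank = n)
    (hsymm : (X * Y.transpose).IsSymm) :
    ∀ A ∈ {B : Finset (Fin n × Bool) | Admissible B ∧
        LinearIndependent F (fun b : {x // x ∈ B} => col X Y b.1)},
      ∀ B ∈ {B : Finset (Fin n × Bool) | Admissible B ∧
        LinearIndependent F (fun b : {x // x ∈ B} => col X Y b.1)},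
      ∀ j ∈ symmDiff A B, ∃ k ∈ symmDiff B A,
        symmDiff A {j, dstar j, k, dstar k} ∈
          {B : Finset (Fin n × Bool) | Admissible B ∧
            LinearIndependent F (fun b : {x // x ∈ B} => col X Y b.1)} := by
  classical
  intro A hA B hB j hj
  simp only [Set.mem_setOf_eq] at hA hB ⊢
  obtain ⟨hAadm, hAli⟩ := hA
  obtain ⟨hBadm, hBli⟩ := hB
  obtain ⟨εA, rfl⟩ := LagAux.exists_graph hAadm
  obtain ⟨εB, rfl⟩ := LagAux.exists_graph hBadm
  have huA : (LagAux.Ncols X Y εA).det ≠ 0 := (LagAux.li_iff_det X Y εA).1 hAli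
  have huB : (LagAux.Ncols X Y εB).det ≠ 0 := (LagAux.li_iff_det X Y εB).1 hBli
  set M := LagAux.Mmat X Y εA with hM
  set σ : Fin n → F := fun i => if εA i then (1:F) else -1 with hσdef
  have hσ : ∀ i, σ i ≠ 0 := by
    intro i
    by_cases h : εA i <;> simp [hσdef, h]
  have hsym : ∀ i k, σ i * M k i = σ k * M i k := fun i k =>
    LagAux.Mmat_symm X Y εA hsymm (isUnit_iff_ne_zero.2 huA) i k
  have hpj : ¬ (εB j.1 = εA j.1) := by
    rw [Finset.mem_symmDiff] at hj
    rcases hj with ⟨hjA, hjB⟩ | ⟨hjB, hjA⟩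
    · rw [LagAux.mem_graphB] at hjA
      intro hcon
      exact hjB (LagAux.mem_graphB.2 (hjA.trans hcon.symm))
    · rw [LagAux.mem_graphB] at hjB
      intro hcon
      exact hjA (LagAux.mem_graphB.2 (hjB.trans hcon))
  have hdetB : (M.submatrix
      (Subtype.val : {x // ¬ (εB x = εA x)} → Fin n) Subtype.val).det ≠ 0 :=
    (LagAux.det_flip_ne X Y εA huA εB (fun x => ¬ (εB x = εA x))
      (fun k => Iff.rfl)).1 huB
  rcases LagAux.exchange_core M σ hσ hsym (fun x => ¬ (εB x = εA x)) hdetB j.1 hpj with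
    hdiag | ⟨k₀, hpk, hkj, hdet2⟩
  · -- Case 1: the diagonal entry works; exchange j for j* only.
    refine ⟨(j.1, εB j.1), ?_, ?_⟩
    · rw [Finset.mem_symmDiff]
      exact Or.inl ⟨LagAux.mem_graphB.2 rfl,
        fun hc => hpj (LagAux.mem_graphB.1 hc)⟩
    · set ε' : Fin n → Bool :=
        fun i => if i = j.1 ∨ i = (j.1, εB j.1).1 then !(εA i) else εA i with hε'
      rw [LagAux.symmDiff_graph εA ε' j (j.1, εB j.1) (fun i => rfl)]
      refine ⟨LagAux.admissible_graphB ε', (LagAux.li_iff_det X Y ε').2 ?_⟩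
      refine (LagAux.det_flip_ne X Y εA huA ε' (fun x => x = j.1) ?_).2 ?_
      · intro x
        constructor
        · intro hcon
          by_contra hx
          apply hcon
          rw [hε']
          simp only
          rw [if_neg (by rintro (h | h) <;> exact hx h)]
        · intro hx
          rw [hε']
          simp only
          rw [if_pos (Or.inl hx)]
          cases εA x <;> simp
      · rw [LagAux.det_single]
        exact hdiag
  · -- Case 2: a genuine two-element exchange.
    refine ⟨(k₀, εB k₀), ?_, ?_⟩
    · rw [Finset.mem_symmDiff]
      exact Or.inl ⟨LagAux.mem_graphB.2 rfl,
        fun hc => hpk (LagAux.mem_graphB.1 hc)⟩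
    · set ε' : Fin n → Bool :=
        fun i => if i = j.1 ∨ i = (k₀, εB k₀).1 then !(εA i) else εA i with hε'
      rw [LagAux.symmDiff_graph εA ε' j (k₀, εB k₀) (fun i => rfl)]
      refine ⟨LagAux.admissible_graphB ε', (LagAux.li_iff_det X Y ε').2 ?_⟩
      refine (LagAux.det_flip_ne X Y εA huA ε' (fun x => x = j.1 ∨ x = k₀) ?_).2 ?_
      · intro x
        constructor
        · intro hcon
          by_contra hx
          apply hcon
          rw [hε']
          simp only
          rw [if_neg hx]
        · intro hx
          rw [hε']
          simp only
          rw [if_pos hx]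
          cases εA x <;> simp
      · rw [LagAux.det_pair (LagAux.Mmat X Y εA) (Ne.symm hkj)]
        exact hdet2
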